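/- If w is a nonnegative locally integrable function on ℝ^n with M(w)(x) < ∞ for almost every x, then for every 0 < δ < 1 the function (M(w))^δ is an A₁ weight, with A₁ constant depending only on n and δ (independent of w). -/

import Mathlib

open MeasureTheory ENNReal

noncomputable section

/-- A cube in `ℝⁿ` with center `c` and side length `r`. -/
def cube (n : ℕ) (c : EuclideanSpace ℝ (Fin n)) (r : ℝ) : Set (EuclideanSpace ℝ (Fin n)) :=
  {x | ∀ i, |x i - c i| ≤ r / 2}

/-- The Hardy–Littlewood maximal function over cubes centered at `x`. -/
def cubeMaximal (n : ℕ) (f : EuclideanSpace ℝ (Fin n) → ℝ≥0∞)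
    (x : EuclideanSpace ℝ (Fin n)) : ℝ≥0∞ :=
  ⨆ (r : ℝ) (_ : 0 < r), (ENNReal.ofReal (r ^ (n : ℝ)))⁻¹ * ∫⁻ y in cube n x r, f y

namespace CR

variable {n : ℕ}

lemma cubeMaximal_def (f : EuclideanSpace ℝ (Fin n) → ℝ≥0∞) (x : EuclideanSpace ℝ (Fin n)) :
    cubeMaximal n f x
      = ⨆ (r : ℝ) (_ : 0 < r), (ENNReal.ofReal (r ^ n))⁻¹ * ∫⁻ y in cube n x r, f y := by
  simp only [cubeMaximal, Real.rpow_natCast]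

lemma self_mem_cube {c : EuclideanSpace ℝ (Fin n)} {r : ℝ} (hr : 0 ≤ r) : c ∈ cube n c r := by
  intro i; simp [abs_of_nonpos]; positivity

lemma cube_subset_cube {c : EuclideanSpace ℝ (Fin n)} {r s : ℝ} (h : r ≤ s) :
    cube n c r ⊆ cube n c s := fun x hx i => (hx i).trans (by linarith)

lemma cube_subset_cube_of_mem {c y : EuclideanSpace ℝ (Fin n)} {r s : ℝ}
    (hy : y ∈ cube n c r) : cube n y s ⊆ cube n c (s + r) := by
  intro z hz i
  have h1 := hz i
  have h2 := hy i
  have : |z i - c i| ≤ |z i - y i| + |y i - c i| := abs_sub_le _ _ _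
  linarith

lemma cube_subset_of_inter {y z : EuclideanSpace ℝ (Fin n)} {s t : ℝ}
    (h : (cube n y s ∩ cube n z t).Nonempty) : cube n y s ⊆ cube n z (2 * s + t) := by
  obtain ⟨p, hp1, hp2⟩ := h
  intro q hq i
  have := hq i; have := hp1 i; have := hp2 i
  have h1 : |q i - z i| ≤ |q i - y i| + |y i - p i| + |p i - z i| := by
    calc |q i - z i| ≤ |q i - p i| + |p i - z i| := abs_sub_le _ _ _
    _ ≤ (|q i - y i| + |y i - p i|) + |p i - z i| := by gcongr; exact abs_sub_le _ _ _
  have h2 : |y i - p i| = |p i - y i| := abs_sub_comm _ _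
  linarith [hp1 i]

lemma measurableSet_cube {c : EuclideanSpace ℝ (Fin n)} {r : ℝ} :
    MeasurableSet (cube n c r) := by
  have : cube n c r = ⋂ i, {x : EuclideanSpace ℝ (Fin n) | |x i - c i| ≤ r / 2} := by
    ext x; simp [cube]
  rw [this]
  refine MeasurableSet.iInter fun i => measurableSet_le ?_ measurable_const
  have hm : Measurable fun x : EuclideanSpace ℝ (Fin n) => x i :=
    (measurable_pi_apply i).comp ((MeasurableEquiv.toLp 2 (Fin n → ℝ)).symm).measurable
  exact (hm.sub measurable_const).abs

lemma volume_cube {c : EuclideanSpace ℝ (Fin n)} {r : ℝ} (hr : 0 ≤ r) :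
    volume (cube n c r) = ENNReal.ofReal (r ^ n) := by
  have hpre : cube n c r = ((MeasurableEquiv.toLp 2 (Fin n → ℝ)).symm) ⁻¹'
      (Set.univ.pi fun i => Set.Icc (c i - r / 2) (c i + r / 2)) := by
    ext x
    simp only [cube, Set.mem_preimage, Set.mem_pi, Set.mem_univ, forall_true_left,
      Set.mem_Icc, Set.mem_setOf_eq]
    refine forall_congr' fun i => ?_
    have hxi : ((MeasurableEquiv.toLp 2 (Fin n → ℝ)).symm) x i = x i := rfl
    rw [hxi, abs_sub_le_iff]
    constructor <;> intro h <;> constructor <;> linarith [h.1, h.2]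
  rw [hpre, (EuclideanSpace.volume_preserving_symm_measurableEquiv_toLp (Fin n)).measure_preimage
    ((MeasurableSet.univ_pi fun i => measurableSet_Icc).nullMeasurableSet)]
  rw [volume_pi_pi]
  simp only [Real.volume_Icc]
  have : ∀ i : Fin n, ENNReal.ofReal (c i + r / 2 - (c i - r / 2)) = ENNReal.ofReal r := by
    intro i; congr 1; ring
  rw [Finset.prod_congr rfl (fun i _ => this i), Finset.prod_const]
  simp [ENNReal.ofReal_pow hr]

end CR
open MeasureTheory ENNReal

namespace CR

variable {n : ℕ}

lemma le_cubeMaximal (f : EuclideanSpace ℝ (Fin n) → ℝ≥0∞) (x : EuclideanSpace ℝ (Fin n))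
    {r : ℝ} (hr : 0 < r) :
    (ENNReal.ofReal (r ^ n))⁻¹ * ∫⁻ y in cube n x r, f y ≤ cubeMaximal n f x := by
  rw [cubeMaximal_def]
  exact le_iSup₂_of_le r hr le_rfl

lemma cubeMaximal_le {f : EuclideanSpace ℝ (Fin n) → ℝ≥0∞} {x : EuclideanSpace ℝ (Fin n)}
    {c : ℝ≥0∞} (h : ∀ r, 0 < r → (ENNReal.ofReal (r ^ n))⁻¹ * ∫⁻ y in cube n x r, f y ≤ c) :
    cubeMaximal n f x ≤ c := by
  rw [cubeMaximal_def]; exact iSup₂_le h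

lemma ofReal_pow_pos {r : ℝ} (hr : 0 < r) : (0:ℝ≥0∞) < ENNReal.ofReal (r ^ n) :=
  ENNReal.ofReal_pos.2 (pow_pos hr n)

lemma setLintegral_le_cubeMaximal (f : EuclideanSpace ℝ (Fin n) → ℝ≥0∞)
    (x : EuclideanSpace ℝ (Fin n)) {r : ℝ} (hr : 0 < r) :
    ∫⁻ y in cube n x r, f y ≤ ENNReal.ofReal (r ^ n) * cubeMaximal n f x := by
  calc ∫⁻ y in cube n x r, f y
      = ENNReal.ofReal (r ^ n) * ((ENNReal.ofReal (r ^ n))⁻¹ * ∫⁻ y in cube n x r, f y) := by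
        rw [← mul_assoc, ENNReal.mul_inv_cancel (ofReal_pow_pos hr).ne' ENNReal.ofReal_ne_top,
          one_mul]
    _ ≤ _ := by gcongr; exact le_cubeMaximal f x hr

lemma cubeMaximal_mono {f g : EuclideanSpace ℝ (Fin n) → ℝ≥0∞} (h : ∀ y, f y ≤ g y)
    (x : EuclideanSpace ℝ (Fin n)) : cubeMaximal n f x ≤ cubeMaximal n g x := by
  apply cubeMaximal_le; intro r hr
  exact le_trans (mul_le_mul_right (lintegral_mono fun y => h y) _) (le_cubeMaximal g x hr)

lemma cubeMaximal_congr_ae {f g : EuclideanSpace ℝ (Fin n) → ℝ≥0∞} (h : f =ᵐ[volume] g) :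
    cubeMaximal n f = cubeMaximal n g := by
  funext x
  rw [cubeMaximal_def, cubeMaximal_def]
  refine iSup_congr fun r => iSup_congr fun _ => ?_
  rw [lintegral_congr_ae (ae_restrict_of_ae h)]

lemma cubeMaximal_add_le {f g : EuclideanSpace ℝ (Fin n) → ℝ≥0∞} (hf : Measurable f)
    (x : EuclideanSpace ℝ (Fin n)) :
    cubeMaximal n (fun y => f y + g y) x ≤ cubeMaximal n f x + cubeMaximal n g x := by
  apply cubeMaximal_le; intro r hr
  rw [lintegral_add_left hf, mul_add]
  gcongr
  · exact le_cubeMaximal f x hr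
  · exact le_cubeMaximal g x hr

lemma measurable_integral_cube {g : EuclideanSpace ℝ (Fin n) → ℝ≥0∞} (hg : Measurable g)
    (q : ℝ) : Measurable (fun y => ∫⁻ z in cube n y q, g z) := by
  set S : Set (EuclideanSpace ℝ (Fin n) × EuclideanSpace ℝ (Fin n)) :=
    {p | ∀ i, |p.2 i - p.1 i| ≤ q / 2} with hS
  have hSm : MeasurableSet S := by
    have : S = ⋂ i, {p : EuclideanSpace ℝ (Fin n) × EuclideanSpace ℝ (Fin n) |
        |p.2 i - p.1 i| ≤ q / 2} := by ext p; simp [hS]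
    rw [this]
    refine MeasurableSet.iInter fun i => measurableSet_le ?_ measurable_const
    have h1 : Measurable fun p : EuclideanSpace ℝ (Fin n) × EuclideanSpace ℝ (Fin n) => p.2 i :=
      ((measurable_pi_apply i).comp ((MeasurableEquiv.toLp 2 (Fin n → ℝ)).symm).measurable).comp
        measurable_snd
    have h2 : Measurable fun p : EuclideanSpace ℝ (Fin n) × EuclideanSpace ℝ (Fin n) => p.1 i :=
      ((measurable_pi_apply i).comp ((MeasurableEquiv.toLp 2 (Fin n → ℝ)).symm).measurable).comp
        measurable_fst
    exact (h1.sub h2).abs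
  have hF : Measurable (S.indicator
      (fun p : EuclideanSpace ℝ (Fin n) × EuclideanSpace ℝ (Fin n) => g p.2)) :=
    (hg.comp measurable_snd).indicator hSm
  have key : ∀ y, ∫⁻ z in cube n y q, g z
      = ∫⁻ z, S.indicator
        (fun p : EuclideanSpace ℝ (Fin n) × EuclideanSpace ℝ (Fin n) => g p.2) (y, z) := by
    intro y
    rw [← lintegral_indicator measurableSet_cube]
    refine lintegral_congr fun z => ?_
    by_cases hz : z ∈ cube n y q
    · rw [Set.indicator_of_mem hz, Set.indicator_of_mem (show (y,z) ∈ S from hz)]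
    · rw [Set.indicator_of_notMem hz, Set.indicator_of_notMem (show (y,z) ∉ S from hz)]
  simp only [key]
  exact hF.lintegral_prod_right'

lemma rat_sup_eq {g : EuclideanSpace ℝ (Fin n) → ℝ≥0∞} (x : EuclideanSpace ℝ (Fin n)) :
    cubeMaximal n g x = ⨆ (q : ℚ) (_ : 0 < (q:ℝ)),
      (ENNReal.ofReal ((q:ℝ) ^ n))⁻¹ * ∫⁻ z in cube n x q, g z := by
  set S := ⨆ (q : ℚ) (_ : 0 < (q:ℝ)),
      (ENNReal.ofReal ((q:ℝ) ^ n))⁻¹ * ∫⁻ z in cube n x q, g z with hSdef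
  apply le_antisymm
  · rcases eq_top_or_lt_top S with hS | hS
    · rw [hS]; exact le_top
    apply cubeMaximal_le
    intro r hr
    -- choose rationals q_j in (r, r + 1/(j+1))
    have hq : ∀ j : ℕ, ∃ q : ℚ, r < q ∧ (q:ℝ) < r + 1/(j+1) := by
      intro j
      exact_mod_cast exists_rat_btwn (lt_add_of_pos_right r (by positivity : (0:ℝ) < 1/(j+1:ℝ)))
    choose q hq1 hq2 using hq
    have hbound : ∀ j, (ENNReal.ofReal (r ^ n))⁻¹ * ∫⁻ y in cube n x r, g y
        ≤ ENNReal.ofReal (((q j:ℝ)/r) ^ n) * S := by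
      intro j
      have hqpos : 0 < ((q j:ℝ)) := hr.trans (hq1 j)
      have hcancel : ENNReal.ofReal ((q j:ℝ) ^ n) * (ENNReal.ofReal ((q j:ℝ) ^ n))⁻¹ = 1 :=
        ENNReal.mul_inv_cancel (ofReal_pow_pos hqpos).ne' ENNReal.ofReal_ne_top
      calc (ENNReal.ofReal (r ^ n))⁻¹ * ∫⁻ y in cube n x r, g y
          ≤ (ENNReal.ofReal (r ^ n))⁻¹ * ∫⁻ y in cube n x (q j), g y := by
            gcongr
            exact cube_subset_cube (hq1 j).le
        _ = ENNReal.ofReal (((q j:ℝ)/r) ^ n) *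
            ((ENNReal.ofReal ((q j:ℝ) ^ n))⁻¹ * ∫⁻ y in cube n x (q j), g y) := by
            rw [div_pow, ENNReal.ofReal_div_of_pos (pow_pos hr n), div_eq_mul_inv]
            rw [show ENNReal.ofReal ((q j:ℝ) ^ n) * (ENNReal.ofReal (r ^ n))⁻¹ *
                ((ENNReal.ofReal ((q j:ℝ) ^ n))⁻¹ * ∫⁻ y in cube n x (q j), g y)
              = (ENNReal.ofReal ((q j:ℝ) ^ n) * (ENNReal.ofReal ((q j:ℝ) ^ n))⁻¹) *
                ((ENNReal.ofReal (r ^ n))⁻¹ * ∫⁻ y in cube n x (q j), g y) by ring]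
            rw [hcancel, one_mul]
        _ ≤ ENNReal.ofReal (((q j:ℝ)/r) ^ n) * S := by
            gcongr
            exact le_iSup₂_of_le (q j) hqpos le_rfl
    have htend : Filter.Tendsto (fun j => ENNReal.ofReal (((q j:ℝ)/r) ^ n) * S)
        Filter.atTop (nhds S) := by
      have h1 : Filter.Tendsto (fun j => ((q j:ℝ)/r) ^ n) Filter.atTop (nhds 1) := by
        have hq' : Filter.Tendsto (fun j => (q j : ℝ)) Filter.atTop (nhds r) := by
          have hupper : Filter.Tendsto (fun j : ℕ => r + 1/(j+1:ℝ)) Filter.atTop (nhds r) := by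
            have h0 : Filter.Tendsto (fun j : ℕ => 1/(j+1:ℝ)) Filter.atTop (nhds 0) :=
              tendsto_one_div_add_atTop_nhds_zero_nat
            simpa using tendsto_const_nhds.add h0
          exact tendsto_of_tendsto_of_tendsto_of_le_of_le tendsto_const_nhds hupper
            (fun j => (hq1 j).le) (fun j => (hq2 j).le)
        have : Filter.Tendsto (fun j => ((q j:ℝ)/r)) Filter.atTop (nhds 1) := by
          have := hq'.div_const r
          simpa [div_self hr.ne'] using this
        simpa using this.pow n
      have h2 : Filter.Tendsto (fun j => ENNReal.ofReal (((q j:ℝ)/r) ^ n))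
          Filter.atTop (nhds 1) := by
        have := (ENNReal.continuous_ofReal.tendsto 1).comp h1
        simpa [Function.comp_def] using this
      have := ENNReal.Tendsto.mul_const h2 (Or.inr hS.ne)
      simpa using this
    exact ge_of_tendsto' htend hbound
  · refine iSup₂_le fun q hq => ?_
    rw [cubeMaximal_def]
    exact le_iSup₂_of_le (q:ℝ) hq le_rfl

lemma measurable_cubeMaximal {g : EuclideanSpace ℝ (Fin n) → ℝ≥0∞} (hg : Measurable g) :
    Measurable (cubeMaximal n g) := by
  have : cubeMaximal n g = fun x => ⨆ (q : ℚ) (_ : 0 < (q:ℝ)),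
      (ENNReal.ofReal ((q:ℝ) ^ n))⁻¹ * ∫⁻ z in cube n x q, g z := funext fun x => rat_sup_eq x
  rw [this]
  exact Measurable.iSup fun q => Measurable.iSup fun _ =>
    (measurable_integral_cube hg _).const_mul _

end CR
open MeasureTheory ENNReal

namespace CR

variable {n : ℕ}

lemma mul_le_of_avg_lt {c I L : ℝ≥0∞} (hc0 : c ≠ 0) (hctop : c ≠ ⊤) (h : L < c⁻¹ * I) :
    L * c < I := by
  have := (ENNReal.mul_lt_mul_iff_right hc0 hctop).2 h
  rwa [← mul_assoc, ENNReal.mul_inv_cancel hc0 hctop, one_mul, mul_comm c L] at this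

lemma le_inv_mul_of_mul_le {c I L : ℝ≥0∞} (hL0 : L ≠ 0) (hLtop : L ≠ ⊤) (h : L * c ≤ I) :
    c ≤ L⁻¹ * I := by
  calc c = L⁻¹ * (L * c) := by
        rw [← mul_assoc, ENNReal.inv_mul_cancel hL0 hLtop, one_mul]
    _ ≤ L⁻¹ * I := by gcongr

lemma weak_one_one {g : EuclideanSpace ℝ (Fin n) → ℝ≥0∞} (hg : Measurable g)
    (hn : n ≠ 0) {T : ℝ≥0∞} (hT : T = ∫⁻ y, g y) (hTtop : T ≠ ⊤)
    {L : ℝ≥0∞} (hL0 : 0 < L) (hLtop : L ≠ ⊤) :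
    volume {y | L < cubeMaximal n g y} ≤ ENNReal.ofReal ((5:ℝ)^n) * L⁻¹ * T := by
  set E := {y | L < cubeMaximal n g y} with hE
  set ν := volume.withDensity g with hν
  have hνcube : ∀ (c : EuclideanSpace ℝ (Fin n)) (r : ℝ), ν (cube n c r)
      = ∫⁻ z in cube n c r, g z := fun c r => withDensity_apply g measurableSet_cube
  have hνuniv : ν Set.univ = T := by
    rw [hν, withDensity_apply g MeasurableSet.univ, Measure.restrict_univ, hT]
  have hνfin : IsFiniteMeasure ν := ⟨by rw [hνuniv]; exact hTtop.lt_top⟩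
  -- each point of E has a good radius
  have hsel : ∀ y ∈ E, ∃ r : ℝ, 0 < r ∧
      L * ENNReal.ofReal (r ^ n) < ∫⁻ z in cube n y r, g z := by
    intro y hy
    rw [hE, Set.mem_setOf_eq, cubeMaximal_def, lt_iSup_iff] at hy
    obtain ⟨r, hr⟩ := hy
    rw [lt_iSup_iff] at hr
    obtain ⟨hrpos, hr⟩ := hr
    exact ⟨r, hrpos, mul_le_of_avg_lt (ofReal_pow_pos hrpos).ne' ENNReal.ofReal_ne_top hr⟩
  -- the family of cubes
  set t : Set (EuclideanSpace ℝ (Fin n) × ℝ) := {p | p.1 ∈ E ∧ 0 < p.2 ∧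
      L * ENNReal.ofReal (p.2 ^ n) < ∫⁻ z in cube n p.1 p.2, g z} with ht
  have hLT : L⁻¹ * T ≠ ⊤ :=
    ENNReal.mul_ne_top (by simp [ENNReal.inv_ne_top, hL0.ne']) hTtop
  have hrad : ∀ p ∈ t, ENNReal.ofReal (p.2 ^ n) ≤ L⁻¹ * T := by
    intro p hp
    refine le_inv_mul_of_mul_le hL0.ne' hLtop (le_trans hp.2.2.le ?_)
    rw [← hνcube]
    exact le_trans (measure_mono (Set.subset_univ _)) hνuniv.le
  set B := (L⁻¹ * T).toReal with hB
  have hradR : ∀ p ∈ t, p.2 ≤ max 1 B := by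
    intro p hp
    have h1 : p.2 ^ n ≤ B := by
      rw [← ENNReal.ofReal_le_iff_le_toReal hLT] at *
      exact hrad p hp
    rcases le_or_gt p.2 1 with h | h
    · exact h.trans (le_max_left _ _)
    · exact le_trans (le_self_pow₀ h.le hn) (h1.trans (le_max_right _ _))
  obtain ⟨u, hut, hdisj, hcover⟩ := Vitali.exists_disjoint_subfamily_covering_enlargement
    (fun p : EuclideanSpace ℝ (Fin n) × ℝ => cube n p.1 p.2) t (fun p => p.2) 2 one_lt_two
    (fun p hp => hp.2.1.le) (max 1 B) hradR
    (fun p hp => ⟨p.1, self_mem_cube hp.2.1.le⟩)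
  -- countability
  have hνpos : ∀ p ∈ u, 0 < ν (cube n p.1 p.2) := by
    intro p hp
    have hpt := hut hp
    rw [hνcube]
    exact lt_of_le_of_lt zero_le hpt.2.2
  have hcnt : u.Countable := by
    have key := MeasureTheory.Measure.countable_meas_pos_of_disjoint_of_meas_iUnion_ne_top
      (μ := ν) (As := fun p : ↥u => cube n p.1.1 p.1.2)
      (fun p => measurableSet_cube)
      (fun i j hij => hdisj i.2 j.2 (fun h => hij (Subtype.ext h)))
      (measure_ne_top ν _)
    have : {i : ↥u | 0 < ν (cube n i.1.1 i.1.2)} = Set.univ := by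
      ext p; simp only [Set.mem_setOf_eq, Set.mem_univ, iff_true]
      exact hνpos p.1 p.2
    rw [this, Set.countable_univ_iff] at key
    exact Set.countable_coe_iff.1 key
  -- covering
  have hEcover : E ⊆ ⋃ p ∈ u, cube n p.1 (5 * p.2) := by
    intro y hy
    obtain ⟨r, hrpos, hr⟩ := hsel y hy
    have hat : (y, r) ∈ t := ⟨hy, hrpos, hr⟩
    obtain ⟨b, hbu, hbne, hble⟩ := hcover (y, r) hat
    have hb2 : 0 < b.2 := (hut hbu).2.1
    have hsub : cube n y r ⊆ cube n b.1 (5 * b.2) := by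
      refine le_trans (cube_subset_of_inter hbne) (cube_subset_cube ?_)
      simp only at hble
      linarith
    exact Set.mem_biUnion hbu (hsub (self_mem_cube hrpos.le))
  calc volume E ≤ volume (⋃ p ∈ u, cube n p.1 (5 * p.2)) := measure_mono hEcover
    _ ≤ ∑' p : u, volume (cube n p.1.1 (5 * p.1.2)) := measure_biUnion_le _ hcnt _
    _ ≤ ∑' p : u, ENNReal.ofReal ((5:ℝ)^n) * (L⁻¹ * ν (cube n p.1.1 p.1.2)) := by
        refine ENNReal.tsum_le_tsum fun p => ?_
        have hp2 : 0 < p.1.2 := (hut p.2).2.1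
        rw [volume_cube (by positivity), mul_pow, ENNReal.ofReal_mul (by positivity)]
        gcongr
        refine le_inv_mul_of_mul_le hL0.ne' hLtop ?_
        rw [hνcube]
        exact (hut p.2).2.2.le
    _ = ENNReal.ofReal ((5:ℝ)^n) * L⁻¹ * (∑' p : u, ν (cube n p.1.1 p.1.2)) := by
        rw [ENNReal.tsum_mul_left, ENNReal.tsum_mul_left, mul_assoc]
    _ ≤ ENNReal.ofReal ((5:ℝ)^n) * L⁻¹ * T := by
        gcongr
        rw [← measure_biUnion hcnt (fun p hp q hq hpq => hdisj hp hq hpq)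
          (fun p _ => measurableSet_cube)]
        exact le_trans (measure_mono (Set.subset_univ _)) hνuniv.le
end CR
open MeasureTheory ENNReal

namespace CR

lemma dyadic_core {δ : ℝ} (hδ1 : δ ≤ 1) (k : ℕ) :
    ((2:ℝ≥0∞)^(k+1))^δ * ((2:ℝ≥0∞)^k)⁻¹ ≤ 2 * ((2:ℝ≥0∞) ^ (δ-1)) ^ k := by
  have h2 : (2:ℝ≥0∞) ≠ 0 := two_ne_zero
  have h2t : (2:ℝ≥0∞) ≠ ⊤ := ENNReal.ofNat_ne_top
  calc ((2:ℝ≥0∞)^(k+1))^δ * ((2:ℝ≥0∞)^k)⁻¹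
      = (2:ℝ≥0∞) ^ ((((k:ℝ)+1)) * δ + (-(k:ℝ))) := by
        rw [← ENNReal.rpow_natCast 2 (k+1), ← ENNReal.rpow_natCast 2 k,
          ← ENNReal.rpow_mul, ← ENNReal.rpow_neg, ← ENNReal.rpow_add _ _ h2 h2t]
        push_cast
        ring_nf
    _ ≤ (2:ℝ≥0∞) ^ ((1:ℝ) + (δ-1) * k) := by
        apply ENNReal.rpow_le_rpow_of_exponent_le one_le_two
        have hk : (0:ℝ) ≤ k := Nat.cast_nonneg k
        nlinarith
    _ = 2 * ((2:ℝ≥0∞) ^ (δ-1)) ^ k := by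
        rw [ENNReal.rpow_add _ _ h2 h2t, ENNReal.rpow_one, ENNReal.rpow_mul,
          ENNReal.rpow_natCast]

lemma kolmogorov {α : Type*} [MeasurableSpace α] {μ : Measure α} {f : α → ℝ≥0∞}
    (hf : Measurable f) {Q : Set α} (hQ : MeasurableSet Q) (hQfin : μ Q ≠ ⊤)
    {δ : ℝ} (hδ0 : 0 < δ) (hδ1 : δ < 1) {lam : ℝ≥0∞} (hl0 : lam ≠ 0) (hltop : lam ≠ ⊤)
    (hweak : ∀ k : ℕ, μ {y | 2^k * lam < f y} ≤ μ Q / 2^k) :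
    ∫⁻ y in Q, f y ^ δ ∂μ ≤ (1 + 2 * (1 - (2:ℝ≥0∞) ^ (δ-1))⁻¹) * (lam ^ δ * μ Q) := by
  classical
  set ρ := (2:ℝ≥0∞) ^ (δ-1) with hρ
  set Sinf := {y | f y = ⊤} with hSinf
  have hSinf0 : μ Sinf = 0 := by
    have hb : ∀ k : ℕ, μ Sinf ≤ μ Q * (2⁻¹:ℝ≥0∞)^k := by
      intro k
      have hsub : Sinf ⊆ {y | 2^k * lam < f y} := by
        intro y hy
        rw [hSinf, Set.mem_setOf_eq] at hy
        rw [Set.mem_setOf_eq, hy]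
        exact lt_top_iff_ne_top.2 (ENNReal.mul_ne_top (by simp) hltop)
      refine le_trans (measure_mono hsub) (le_trans (hweak k) ?_)
      rw [ENNReal.div_eq_inv_mul, mul_comm, ENNReal.inv_pow]
    have htend : Filter.Tendsto (fun k : ℕ => μ Q * (2⁻¹:ℝ≥0∞)^k) Filter.atTop (nhds 0) := by
      have h1 : Filter.Tendsto (fun k : ℕ => (2⁻¹:ℝ≥0∞)^k) Filter.atTop (nhds 0) :=
        ENNReal.tendsto_pow_atTop_nhds_zero_of_lt_one (by
          rw [ENNReal.inv_lt_one]; exact one_lt_two)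
      have h2 := ENNReal.Tendsto.const_mul h1 (Or.inr hQfin)
      simpa using h2
    have hle := ge_of_tendsto' htend hb
    exact le_antisymm (by simpa using hle) zero_le
  set Ann : ℕ → Set α := fun k => {y | 2^k * lam < f y} ∩ {y | f y ≤ 2^(k+1) * lam} with hAnn
  -- covering
  have hcov : Q ⊆ (Q ∩ {y | f y ≤ lam}) ∪ (Sinf ∪ ⋃ k, Ann k) := by
    intro y hy
    rcases le_or_gt (f y) lam with h | h
    · exact Or.inl ⟨hy, h⟩
    rcases eq_or_ne (f y) ⊤ with htop | htop
    · exact Or.inr (Or.inl htop)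
    refine Or.inr (Or.inr ?_)
    have hex : ∃ m : ℕ, f y ≤ 2^m * lam := by
      obtain ⟨j, hj⟩ := ENNReal.exists_nat_gt (by
        exact (ENNReal.div_lt_top htop hl0).ne : f y / lam ≠ ⊤)
      refine ⟨j, ?_⟩
      have hj2 : f y / lam ≤ 2^j := le_trans hj.le (by exact_mod_cast Nat.le_of_lt (Nat.lt_two_pow_self (n := j)))
      rwa [ENNReal.div_le_iff_le_mul (Or.inl hl0) (Or.inl hltop)] at hj2
    set m := Nat.find hex with hm
    have hmle : f y ≤ 2^m * lam := Nat.find_spec hex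
    have hm0 : m ≠ 0 := by
      intro h0
      rw [h0] at hmle
      simp only [pow_zero, one_mul] at hmle
      exact absurd hmle (not_le.2 h)
    have hklt : ¬ (f y ≤ 2^(m-1) * lam) := Nat.find_min hex (Nat.pred_lt hm0)
    refine Set.mem_iUnion.2 ⟨m-1, ⟨not_le.1 hklt, ?_⟩⟩
    rw [Set.mem_setOf_eq, Nat.sub_add_cancel (Nat.one_le_iff_ne_zero.2 hm0)]
    exact hmle
  -- main estimate
  have h1 : ∫⁻ y in Q ∩ {y | f y ≤ lam}, f y ^ δ ∂μ ≤ lam ^ δ * μ Q := by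
    calc ∫⁻ y in Q ∩ {y | f y ≤ lam}, f y ^ δ ∂μ
        ≤ ∫⁻ _ in Q ∩ {y | f y ≤ lam}, lam ^ δ ∂μ := by
          refine lintegral_mono_ae ?_
          filter_upwards [ae_restrict_mem (hQ.inter (measurableSet_le hf measurable_const))]
            with y hy
          exact ENNReal.rpow_le_rpow hy.2 hδ0.le
      _ = lam ^ δ * μ (Q ∩ {y | f y ≤ lam}) := setLIntegral_const _ _
      _ ≤ lam ^ δ * μ Q := by gcongr; exact Set.inter_subset_left
  have h2 : ∀ k : ℕ, ∫⁻ y in Ann k, f y ^ δ ∂μ ≤ 2 * ρ ^ k * (lam ^ δ * μ Q) := by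
    intro k
    have hAnnm : MeasurableSet (Ann k) :=
      (measurableSet_lt measurable_const hf).inter (measurableSet_le hf measurable_const)
    have step1 : ∫⁻ y in Ann k, f y ^ δ ∂μ ≤ (2^(k+1) * lam) ^ δ * (μ Q / 2^k) := by
      calc ∫⁻ y in Ann k, f y ^ δ ∂μ
          ≤ ∫⁻ _ in Ann k, (2^(k+1) * lam) ^ δ ∂μ := by
            refine lintegral_mono_ae ?_
            filter_upwards [ae_restrict_mem hAnnm] with y hy
            exact ENNReal.rpow_le_rpow hy.2 hδ0.le
        _ = (2^(k+1) * lam) ^ δ * μ (Ann k) := setLIntegral_const _ _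
        _ ≤ (2^(k+1) * lam) ^ δ * (μ Q / 2^k) := by
            gcongr
            exact le_trans (measure_mono Set.inter_subset_left) (hweak k)
    refine le_trans step1 ?_
    have hexp : ((2:ℝ≥0∞)^(k+1) * lam) ^ δ = ((2:ℝ≥0∞)^(k+1))^δ * lam ^ δ :=
      ENNReal.mul_rpow_of_nonneg _ _ hδ0.le
    rw [hexp, div_eq_mul_inv]
    calc ((2:ℝ≥0∞)^(k+1))^δ * lam ^ δ * (μ Q * ((2:ℝ≥0∞)^k)⁻¹)
        = (((2:ℝ≥0∞)^(k+1))^δ * ((2:ℝ≥0∞)^k)⁻¹) * (lam ^ δ * μ Q) := by ring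
      _ ≤ (2 * ρ ^ k) * (lam ^ δ * μ Q) := mul_le_mul_left (dyadic_core hδ1.le k) _
      _ = 2 * ρ ^ k * (lam ^ δ * μ Q) := by ring
  calc ∫⁻ y in Q, f y ^ δ ∂μ
      ≤ ∫⁻ y in (Q ∩ {y | f y ≤ lam}) ∪ (Sinf ∪ ⋃ k, Ann k), f y ^ δ ∂μ :=
        lintegral_mono_set hcov
    _ ≤ (∫⁻ y in Q ∩ {y | f y ≤ lam}, f y ^ δ ∂μ)
        + (∫⁻ y in Sinf ∪ ⋃ k, Ann k, f y ^ δ ∂μ) := lintegral_union_le _ _ _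
    _ ≤ (∫⁻ y in Q ∩ {y | f y ≤ lam}, f y ^ δ ∂μ)
        + ((∫⁻ y in Sinf, f y ^ δ ∂μ) + ∫⁻ y in ⋃ k, Ann k, f y ^ δ ∂μ) := by
        gcongr
        exact lintegral_union_le _ _ _
    _ ≤ lam ^ δ * μ Q + (0 + ∑' k, ∫⁻ y in Ann k, f y ^ δ ∂μ) := by
        refine add_le_add h1 (add_le_add ?_ ?_)
        · exact le_of_eq (setLIntegral_measure_zero _ _ hSinf0)
        · exact lintegral_iUnion_le _ _
    _ ≤ lam ^ δ * μ Q + (0 + ∑' k, 2 * ρ ^ k * (lam ^ δ * μ Q)) :=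
        add_le_add le_rfl (add_le_add le_rfl (ENNReal.tsum_le_tsum h2))
    _ = (1 + 2 * (1 - ρ)⁻¹) * (lam ^ δ * μ Q) := by
        rw [zero_add]
        have hsum : ∑' k : ℕ, 2 * ρ ^ k * (lam ^ δ * μ Q)
            = 2 * (1 - ρ)⁻¹ * (lam ^ δ * μ Q) := by
          calc ∑' k : ℕ, 2 * ρ ^ k * (lam ^ δ * μ Q)
              = ∑' k : ℕ, (2 * (lam ^ δ * μ Q)) * ρ ^ k := tsum_congr fun k => by ring
            _ = (2 * (lam ^ δ * μ Q)) * ∑' k : ℕ, ρ ^ k := ENNReal.tsum_mul_left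
            _ = 2 * (1 - ρ)⁻¹ * (lam ^ δ * μ Q) := by rw [ENNReal.tsum_geometric]; ring
        rw [hsum]; ring
end CR
open MeasureTheory ENNReal

namespace CR

variable {n : ℕ}

lemma main_bound (hn : n ≠ 0) {δ : ℝ} (hδ0 : 0 < δ) (hδ1 : δ < 1)
    {g : EuclideanSpace ℝ (Fin n) → ℝ≥0∞} (hg : Measurable g)
    {x : EuclideanSpace ℝ (Fin n)} (hx : cubeMaximal n g x ≠ ⊤) :
    cubeMaximal n (fun y => cubeMaximal n g y ^ δ) x
      ≤ ((1 + 2 * (1 - (2:ℝ≥0∞) ^ (δ-1))⁻¹) * ENNReal.ofReal ((10:ℝ)^n)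
          + ENNReal.ofReal ((2:ℝ)^n)) * cubeMaximal n g x ^ δ := by
  set m := cubeMaximal n g x with hm
  set K := 1 + 2 * (1 - (2:ℝ≥0∞) ^ (δ-1))⁻¹ with hK
  apply cubeMaximal_le
  intro r hr
  set Q := cube n x r with hQ
  set Q2 := cube n x (2*r) with hQ2
  set g₁ := Q2.indicator g with hg₁
  set g₂ := Q2ᶜ.indicator g with hg₂
  have hg1m : Measurable g₁ := hg.indicator measurableSet_cube
  have hM1m : Measurable (fun y => cubeMaximal n g₁ y ^ δ) :=
    ENNReal.continuous_rpow_const.measurable.comp (measurable_cubeMaximal hg1m)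
  have hr' : ENNReal.ofReal (r ^ n) ≠ 0 := (ofReal_pow_pos hr).ne'
  have hr'' : ENNReal.ofReal (r ^ n) ≠ ⊤ := ENNReal.ofReal_ne_top
  -- pointwise subadditivity after rpow
  have hsplit : ∀ y, cubeMaximal n g y ^ δ
      ≤ cubeMaximal n g₁ y ^ δ + cubeMaximal n g₂ y ^ δ := by
    intro y
    have h1 : cubeMaximal n g y ≤ cubeMaximal n g₁ y + cubeMaximal n g₂ y := by
      have heq : ∀ z, g z = g₁ z + g₂ z := by
        intro z
        rw [hg₁, hg₂]
        exact (congrFun (Set.indicator_self_add_compl Q2 g) z).symm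
      calc cubeMaximal n g y = cubeMaximal n (fun z => g₁ z + g₂ z) y := by
            congr 1; funext z; exact heq z
        _ ≤ _ := cubeMaximal_add_le hg1m y
    calc cubeMaximal n g y ^ δ ≤ (cubeMaximal n g₁ y + cubeMaximal n g₂ y) ^ δ :=
          ENNReal.rpow_le_rpow h1 hδ0.le
      _ ≤ _ := ENNReal.rpow_add_le_add_rpow _ _ hδ0.le hδ1.le
  -- far part : pointwise bound on Q
  have hfar : ∀ y ∈ Q, cubeMaximal n g₂ y ≤ ENNReal.ofReal ((2:ℝ)^n) * m := by
    intro y hy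
    apply cubeMaximal_le
    intro s hs
    rcases le_or_gt s r with hsr | hsr
    · have hzero : ∫⁻ z in cube n y s, g₂ z = 0 := by
        have hsub : cube n y s ⊆ Q2 := by
          refine le_trans (cube_subset_cube_of_mem hy) (cube_subset_cube (by linarith))
        refine le_antisymm (le_trans (lintegral_mono_set hsub) ?_) zero_le
        rw [hg₂, lintegral_indicator measurableSet_cube.compl,
          Measure.restrict_restrict measurableSet_cube.compl, Set.compl_inter_self,
          Measure.restrict_empty, lintegral_zero_measure]
      rw [hzero, mul_zero]
      exact zero_le
    · have hsub : cube n y s ⊆ cube n x (2*s) := by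
        refine le_trans (cube_subset_cube_of_mem hy) (cube_subset_cube (by linarith))
      have hs' : ENNReal.ofReal (s ^ n) ≠ 0 := (ofReal_pow_pos hs).ne'
      calc (ENNReal.ofReal (s ^ n))⁻¹ * ∫⁻ z in cube n y s, g₂ z
          ≤ (ENNReal.ofReal (s ^ n))⁻¹ * ∫⁻ z in cube n x (2*s), g z := by
            refine mul_le_mul_right ?_ _
            refine le_trans (lintegral_mono fun z => Set.indicator_le_self _ _ z)
              (lintegral_mono_set hsub)
        _ ≤ (ENNReal.ofReal (s ^ n))⁻¹ * (ENNReal.ofReal ((2*s) ^ n) * m) := by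
            gcongr
            exact setLintegral_le_cubeMaximal g x (by linarith)
        _ = ENNReal.ofReal ((2:ℝ)^n) * m := by
            rw [mul_pow, ENNReal.ofReal_mul (by positivity)]
            rw [show (ENNReal.ofReal (s ^ n))⁻¹ *
                (ENNReal.ofReal ((2:ℝ)^n) * ENNReal.ofReal (s^n) * m)
              = ((ENNReal.ofReal (s^n))⁻¹ * ENNReal.ofReal (s^n)) *
                (ENNReal.ofReal ((2:ℝ)^n) * m) by ring]
            rw [ENNReal.inv_mul_cancel hs' ENNReal.ofReal_ne_top, one_mul]
  have h2n1 : (1:ℝ≥0∞) ≤ ENNReal.ofReal ((2:ℝ)^n) :=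
    ENNReal.one_le_ofReal.2 (one_le_pow₀ one_le_two)
  have h10n1 : (1:ℝ≥0∞) ≤ ENNReal.ofReal ((10:ℝ)^n) :=
    ENNReal.one_le_ofReal.2 (one_le_pow₀ (by norm_num))
  have hfar2 : (ENNReal.ofReal (r ^ n))⁻¹ * ∫⁻ y in Q, cubeMaximal n g₂ y ^ δ
      ≤ ENNReal.ofReal ((2:ℝ)^n) * m ^ δ := by
    have hint : ∫⁻ y in Q, cubeMaximal n g₂ y ^ δ
        ≤ (ENNReal.ofReal ((2:ℝ)^n) * m) ^ δ * ENNReal.ofReal (r ^ n) := by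
      calc ∫⁻ y in Q, cubeMaximal n g₂ y ^ δ
          ≤ ∫⁻ _ in Q, (ENNReal.ofReal ((2:ℝ)^n) * m) ^ δ := by
            refine lintegral_mono_ae ?_
            filter_upwards [ae_restrict_mem measurableSet_cube] with y hy
            exact ENNReal.rpow_le_rpow (hfar y hy) hδ0.le
        _ = (ENNReal.ofReal ((2:ℝ)^n) * m) ^ δ * volume Q := setLIntegral_const _ _
        _ = (ENNReal.ofReal ((2:ℝ)^n) * m) ^ δ * ENNReal.ofReal (r ^ n) := by
            rw [hQ, volume_cube hr.le]
    calc (ENNReal.ofReal (r ^ n))⁻¹ * ∫⁻ y in Q, cubeMaximal n g₂ y ^ δ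
        ≤ (ENNReal.ofReal (r ^ n))⁻¹ * ((ENNReal.ofReal ((2:ℝ)^n) * m) ^ δ
            * ENNReal.ofReal (r ^ n)) := by gcongr
      _ = (ENNReal.ofReal ((2:ℝ)^n) * m) ^ δ := by
          rw [show (ENNReal.ofReal (r ^ n))⁻¹ * ((ENNReal.ofReal ((2:ℝ)^n) * m) ^ δ
              * ENNReal.ofReal (r ^ n))
            = ((ENNReal.ofReal (r ^ n))⁻¹ * ENNReal.ofReal (r ^ n)) *
              (ENNReal.ofReal ((2:ℝ)^n) * m) ^ δ by ring]
          rw [ENNReal.inv_mul_cancel hr' hr'', one_mul]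
      _ ≤ ENNReal.ofReal ((2:ℝ)^n) * m ^ δ := by
          rw [ENNReal.mul_rpow_of_nonneg _ _ hδ0.le]
          gcongr
          calc ENNReal.ofReal ((2:ℝ)^n) ^ δ ≤ ENNReal.ofReal ((2:ℝ)^n) ^ (1:ℝ) :=
              ENNReal.rpow_le_rpow_of_exponent_le h2n1 hδ1.le
            _ = ENNReal.ofReal ((2:ℝ)^n) := ENNReal.rpow_one _
  -- local part
  set T := ∫⁻ z, g₁ z with hT
  have hTeq : T = ∫⁻ z in Q2, g z := by
    rw [hT, hg₁, lintegral_indicator measurableSet_cube]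
  have hTle : T ≤ ENNReal.ofReal ((2*r) ^ n) * m := by
    rw [hTeq]
    exact setLintegral_le_cubeMaximal g x (by linarith)
  have hTtop : T ≠ ⊤ := by
    refine ne_top_of_le_ne_top ?_ hTle
    exact ENNReal.mul_ne_top ENNReal.ofReal_ne_top hx
  have hloc : (ENNReal.ofReal (r ^ n))⁻¹ * ∫⁻ y in Q, cubeMaximal n g₁ y ^ δ
      ≤ K * ENNReal.ofReal ((10:ℝ)^n) * m ^ δ := by
    rcases eq_or_ne T 0 with hT0 | hT0
    · have hzero : ∀ y, cubeMaximal n g₁ y = 0 := by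
        intro y
        refine le_antisymm (cubeMaximal_le fun s hs => ?_) zero_le
        have hle : ∫⁻ z in cube n y s, g₁ z ≤ ∫⁻ z, g₁ z :=
          setLIntegral_le_lintegral _ _
        rw [← hT, hT0] at hle
        rw [le_zero_iff.1 hle, mul_zero]
      have : ∫⁻ y in Q, cubeMaximal n g₁ y ^ δ = 0 := by
        have : ∀ y, cubeMaximal n g₁ y ^ δ = 0 := fun y => by
          rw [hzero y, ENNReal.zero_rpow_of_pos hδ0]
        simp [this]
      rw [this, mul_zero]
      exact zero_le
    · set a := ENNReal.ofReal ((5:ℝ)^n) * T with ha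
      have ha0 : a ≠ 0 := by
        simp only [ha, mul_ne_zero_iff]
        exact ⟨(ENNReal.ofReal_pos.2 (by positivity)).ne', hT0⟩
      have hatop : a ≠ ⊤ := ENNReal.mul_ne_top ENNReal.ofReal_ne_top hTtop
      set lam := (ENNReal.ofReal (r ^ n))⁻¹ * a with hlam
      have hlam0 : lam ≠ 0 := by
        simp only [hlam, mul_ne_zero_iff]
        exact ⟨ENNReal.inv_ne_zero.2 hr'', ha0⟩
      have hlamtop : lam ≠ ⊤ :=
        ENNReal.mul_ne_top (ENNReal.inv_ne_top.2 hr') hatop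
      have hlaminv : lam⁻¹ = ENNReal.ofReal (r ^ n) * a⁻¹ := by
        rw [hlam, ENNReal.mul_inv (Or.inr hatop) (Or.inr ha0), inv_inv]
      have hweak : ∀ k : ℕ, volume {y | 2^k * lam < cubeMaximal n g₁ y}
          ≤ volume Q / 2^k := by
        intro k
        have hL0 : (0:ℝ≥0∞) < 2^k * lam := by
          refine ENNReal.mul_pos (by positivity) hlam0
        have hLtop : (2:ℝ≥0∞)^k * lam ≠ ⊤ :=
          ENNReal.mul_ne_top (by simp) hlamtop
        refine le_trans (weak_one_one hg1m hn hT hTtop hL0 hLtop) ?_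
        have hLinv : ((2:ℝ≥0∞)^k * lam)⁻¹ = ((2:ℝ≥0∞)^k)⁻¹ * lam⁻¹ := by
          rw [ENNReal.mul_inv (Or.inr hlamtop) (Or.inr hlam0)]
        rw [hLinv, hlaminv, hQ, volume_cube hr.le, ENNReal.div_eq_inv_mul]
        rw [show ENNReal.ofReal ((5:ℝ)^n) * (((2:ℝ≥0∞)^k)⁻¹ *
            (ENNReal.ofReal (r ^ n) * a⁻¹)) * T
          = (a * a⁻¹) * (((2:ℝ≥0∞)^k)⁻¹ * ENNReal.ofReal (r ^ n)) by rw [ha]; ring]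
        rw [ENNReal.mul_inv_cancel ha0 hatop, one_mul]
      have hkol := kolmogorov (measurable_cubeMaximal hg1m) measurableSet_cube
        (by rw [volume_cube hr.le]; exact hr'') hδ0 hδ1 hlam0 hlamtop hweak
      have hlamle : lam ≤ ENNReal.ofReal ((10:ℝ)^n) * m := by
        rw [hlam, ha]
        calc (ENNReal.ofReal (r ^ n))⁻¹ * (ENNReal.ofReal ((5:ℝ)^n) * T)
            ≤ (ENNReal.ofReal (r ^ n))⁻¹ * (ENNReal.ofReal ((5:ℝ)^n) *
              (ENNReal.ofReal ((2*r) ^ n) * m)) := by gcongr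
          _ = ENNReal.ofReal ((10:ℝ)^n) * m := by
              rw [mul_pow, ENNReal.ofReal_mul (by positivity)]
              rw [show (ENNReal.ofReal (r ^ n))⁻¹ * (ENNReal.ofReal ((5:ℝ)^n) *
                  (ENNReal.ofReal ((2:ℝ)^n) * ENNReal.ofReal (r^n) * m))
                = ((ENNReal.ofReal (r^n))⁻¹ * ENNReal.ofReal (r^n)) *
                  (ENNReal.ofReal ((5:ℝ)^n) * ENNReal.ofReal ((2:ℝ)^n) * m) by ring]
              rw [ENNReal.inv_mul_cancel hr' hr'', one_mul,
                ← ENNReal.ofReal_mul (by positivity), ← mul_pow]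
              norm_num
      calc (ENNReal.ofReal (r ^ n))⁻¹ * ∫⁻ y in Q, cubeMaximal n g₁ y ^ δ
          ≤ (ENNReal.ofReal (r ^ n))⁻¹ * (K * (lam ^ δ * volume Q)) := by gcongr
        _ = K * lam ^ δ := by
            rw [hQ, volume_cube hr.le]
            rw [show (ENNReal.ofReal (r ^ n))⁻¹ * (K * (lam ^ δ * ENNReal.ofReal (r ^ n)))
              = ((ENNReal.ofReal (r ^ n))⁻¹ * ENNReal.ofReal (r ^ n)) * (K * lam ^ δ) by ring]
            rw [ENNReal.inv_mul_cancel hr' hr'', one_mul]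
        _ ≤ K * (ENNReal.ofReal ((10:ℝ)^n) * m ^ δ) := by
            gcongr
            calc lam ^ δ ≤ (ENNReal.ofReal ((10:ℝ)^n) * m) ^ δ :=
                ENNReal.rpow_le_rpow hlamle hδ0.le
              _ = ENNReal.ofReal ((10:ℝ)^n) ^ δ * m ^ δ :=
                ENNReal.mul_rpow_of_nonneg _ _ hδ0.le
              _ ≤ ENNReal.ofReal ((10:ℝ)^n) * m ^ δ := by
                gcongr
                calc ENNReal.ofReal ((10:ℝ)^n) ^ δ ≤ ENNReal.ofReal ((10:ℝ)^n) ^ (1:ℝ) :=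
                    ENNReal.rpow_le_rpow_of_exponent_le h10n1 hδ1.le
                  _ = ENNReal.ofReal ((10:ℝ)^n) := ENNReal.rpow_one _
        _ = K * ENNReal.ofReal ((10:ℝ)^n) * m ^ δ := by ring
  -- combine
  calc (ENNReal.ofReal (r ^ n))⁻¹ * ∫⁻ y in Q, cubeMaximal n g y ^ δ
      ≤ (ENNReal.ofReal (r ^ n))⁻¹ *
        ∫⁻ y in Q, (cubeMaximal n g₁ y ^ δ + cubeMaximal n g₂ y ^ δ) :=
        mul_le_mul_right (lintegral_mono fun y => hsplit y) _
    _ = (ENNReal.ofReal (r ^ n))⁻¹ * ((∫⁻ y in Q, cubeMaximal n g₁ y ^ δ)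
        + ∫⁻ y in Q, cubeMaximal n g₂ y ^ δ) := by
        rw [lintegral_add_left hM1m]
    _ = (ENNReal.ofReal (r ^ n))⁻¹ * (∫⁻ y in Q, cubeMaximal n g₁ y ^ δ)
        + (ENNReal.ofReal (r ^ n))⁻¹ * ∫⁻ y in Q, cubeMaximal n g₂ y ^ δ := mul_add _ _ _
    _ ≤ K * ENNReal.ofReal ((10:ℝ)^n) * m ^ δ + ENNReal.ofReal ((2:ℝ)^n) * m ^ δ :=
        add_le_add hloc hfar2
    _ = (K * ENNReal.ofReal ((10:ℝ)^n) + ENNReal.ofReal ((2:ℝ)^n)) * m ^ δ := by ring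

end CR
open MeasureTheory ENNReal

namespace CR

lemma const_le {δ : ℝ} (hδ0 : 0 < δ) (hδ1 : δ < 1) (n : ℕ) :
    (1 + 2 * (1 - (2:ℝ≥0∞) ^ (δ-1))⁻¹) * ENNReal.ofReal ((10:ℝ)^n) + ENNReal.ofReal ((2:ℝ)^n)
      ≤ ENNReal.ofReal ((1 + 2 * (1 - (2:ℝ)^(δ-1))⁻¹) * 10^n + 2^n) := by
  have hρpos : (0:ℝ) < (2:ℝ)^(δ-1) := Real.rpow_pos_of_pos two_pos _
  have hρlt : (2:ℝ)^(δ-1) < 1 := Real.rpow_lt_one_of_one_lt_of_neg one_lt_two (by linarith)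
  have hbpos : (0:ℝ) < (1 - (2:ℝ)^(δ-1))⁻¹ := inv_pos.2 (by linarith)
  have e1 : (2:ℝ≥0∞) ^ (δ-1) = ENNReal.ofReal ((2:ℝ)^(δ-1)) := by
    rw [← ENNReal.ofReal_rpow_of_pos two_pos, ENNReal.ofReal_ofNat]
  have e2 : (1:ℝ≥0∞) - ENNReal.ofReal ((2:ℝ)^(δ-1))
      = ENNReal.ofReal (1 - (2:ℝ)^(δ-1)) := by
    rw [ENNReal.ofReal_sub _ hρpos.le, ENNReal.ofReal_one]
  have e3 : (ENNReal.ofReal (1 - (2:ℝ)^(δ-1)))⁻¹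
      = ENNReal.ofReal ((1 - (2:ℝ)^(δ-1))⁻¹) :=
    (ENNReal.ofReal_inv_of_pos (by linarith)).symm
  have e4 : (1:ℝ≥0∞) + 2 * ENNReal.ofReal ((1 - (2:ℝ)^(δ-1))⁻¹)
      = ENNReal.ofReal (1 + 2 * (1 - (2:ℝ)^(δ-1))⁻¹) := by
    rw [ENNReal.ofReal_add (by norm_num) (by positivity), ENNReal.ofReal_one,
      ENNReal.ofReal_mul (by norm_num), ENNReal.ofReal_ofNat]
  rw [e1, e2, e3, e4, ← ENNReal.ofReal_mul (by positivity),
    ← ENNReal.ofReal_add (by positivity) (by positivity)]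

lemma cube_zero (c : EuclideanSpace ℝ (Fin 0)) (r : ℝ) : cube 0 c r = Set.univ := by
  ext z; simp only [cube, Set.mem_setOf_eq, Set.mem_univ, iff_true]
  exact fun i => i.elim0

lemma point_eq (y z : EuclideanSpace ℝ (Fin 0)) : y = z := by ext i; exact i.elim0

lemma vol_univ_zero : (volume : Measure (EuclideanSpace ℝ (Fin 0))) Set.univ = 1 := by
  have h := volume_cube (n := 0) (c := 0) (r := 1) zero_le_one
  rw [cube_zero] at h
  simpa using h

lemma dim_zero (f : EuclideanSpace ℝ (Fin 0) → ℝ≥0∞) (x : EuclideanSpace ℝ (Fin 0)) :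
    cubeMaximal 0 f x = ∫⁻ y, f y := by
  rw [cubeMaximal_def]
  apply le_antisymm
  · refine iSup₂_le fun r hr => ?_
    rw [cube_zero, Measure.restrict_univ, pow_zero, ENNReal.ofReal_one, inv_one, one_mul]
  · refine le_iSup₂_of_le 1 one_pos ?_
    rw [cube_zero, Measure.restrict_univ]
    simp

end CR


/-- If `M(w) < ∞` a.e., then for `0 < δ < 1` the function `(M w)^δ` is an `A₁` weight,
with `A₁` constant depending only on `n` and `δ`. -/
theorem maximal_rpow_A1 (n : ℕ) (δ : ℝ) (hδ0 : 0 < δ) (hδ1 : δ < 1) :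
    ∃ C > (0:ℝ), ∀ w : EuclideanSpace ℝ (Fin n) → ℝ, (∀ x, 0 ≤ w x) →
      LocallyIntegrable w volume →
      (∀ᵐ x ∂volume, cubeMaximal n (fun y => ENNReal.ofReal (w y)) x < ⊤) →
      ∀ᵐ x ∂volume,
        cubeMaximal n (fun y => cubeMaximal n (fun z => ENNReal.ofReal (w z)) y ^ δ) x ≤
          ENNReal.ofReal C * cubeMaximal n (fun y => ENNReal.ofReal (w y)) x ^ δ := by
  classical
  have hρpos : (0:ℝ) < (2:ℝ)^(δ-1) := Real.rpow_pos_of_pos two_pos _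
  have hρlt : (2:ℝ)^(δ-1) < 1 := Real.rpow_lt_one_of_one_lt_of_neg one_lt_two (by linarith)
  have hbpos : (0:ℝ) < (1 - (2:ℝ)^(δ-1))⁻¹ := inv_pos.2 (by linarith)
  set C : ℝ := (1 + 2 * (1 - (2:ℝ)^(δ-1))⁻¹) * 10^n + 2^n with hC
  have hC1 : (1:ℝ) ≤ C := by
    rw [hC]
    have h10 : (1:ℝ) ≤ 10^n := one_le_pow₀ (by norm_num)
    have h2 : (1:ℝ) ≤ 2^n := one_le_pow₀ (by norm_num)
    nlinarith
  refine ⟨C, by linarith, ?_⟩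
  intro w hw hloc hae
  set g₀ : EuclideanSpace ℝ (Fin n) → ℝ≥0∞ := fun z => ENNReal.ofReal (w z) with hg₀
  rcases Nat.eq_zero_or_pos n with hn0 | hnpos
  · subst hn0
    refine Filter.Eventually.of_forall fun x => ?_
    rw [CR.dim_zero]
    have hconst : ∀ y, cubeMaximal 0 g₀ y ^ δ = cubeMaximal 0 g₀ x ^ δ := fun y => by
      rw [CR.point_eq y x]
    calc ∫⁻ y, cubeMaximal 0 g₀ y ^ δ = ∫⁻ _, cubeMaximal 0 g₀ x ^ δ :=
          lintegral_congr fun y => hconst y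
      _ = cubeMaximal 0 g₀ x ^ δ * volume Set.univ := lintegral_const _
      _ = cubeMaximal 0 g₀ x ^ δ := by rw [CR.vol_univ_zero, mul_one]
      _ ≤ ENNReal.ofReal C * cubeMaximal 0 g₀ x ^ δ :=
          le_mul_of_one_le_left zero_le (ENNReal.one_le_ofReal.2 hC1)
  · have hg₀ae : AEMeasurable g₀ volume :=
      (hloc.aestronglyMeasurable.aemeasurable).ennreal_ofReal
    set g := hg₀ae.mk g₀ with hgdef
    have hgm : Measurable g := hg₀ae.measurable_mk
    have hge : g₀ =ᵐ[volume] g := hg₀ae.ae_eq_mk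
    have hMeq : cubeMaximal n g₀ = cubeMaximal n g := CR.cubeMaximal_congr_ae hge
    rw [hMeq] at hae ⊢
    filter_upwards [hae] with x hx
    refine le_trans (CR.main_bound hnpos.ne' hδ0 hδ1 hgm hx.ne) ?_
    exact mul_le_mul_left (CR.const_le hδ0 hδ1 n) _
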